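/- Let d, p ≥ 1 and let Φ : ℝ^d → ℝ^{p×d}. Define K(u,v) := Φ(u)ᵀ·Φ(v) ∈ ℝ^{d×d} and d²_{K_ii}(u,v) := K(u,u)_{ii} − 2·K(u,v)_{ii} + K(v,v)_{ii}. Then the following are equivalent: (i) there exists N_K ≥ 0 such that d²_{K_ii}(u,v) ≤ N_K²·‖u − v‖² for all u, v ∈ ℝ^d and all i = 1,…,d; (ii) Φ is Lipschitz with respect to the Frobenius norm, i.e. there exists N ≥ 0 such that ‖Φ(u) − Φ(v)‖_F ≤ N·‖u − v‖ for all u, v ∈ ℝ^d. -/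
import Mathlib


open Matrix

/-- The squared Frobenius norm `‖A‖_F² = Σ_{j,i} A_{ji}²` of a real matrix. -/
def frobeniusNormSq {p d : ℕ} (A : Matrix (Fin p) (Fin d) ℝ) : ℝ :=
  ∑ j : Fin p, ∑ i : Fin d, (A j i) ^ 2

lemma key_sum {p d : ℕ} (A B : Matrix (Fin p) (Fin d) ℝ) (i : Fin d) :
    (Aᵀ * A) i i - 2 * (Aᵀ * B) i i + (Bᵀ * B) i i
      = ∑ j : Fin p, (A j i - B j i) ^ 2 := by
  simp only [Matrix.mul_apply, Matrix.transpose_apply, Finset.mul_sum,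
    ← Finset.sum_sub_distrib, ← Finset.sum_add_distrib]
  apply Finset.sum_congr rfl
  intro j _
  ring

/-- **Equivalence for explicit kernels (Appendix B.2).** For
`K(u,v) = Φ(u)ᵀΦ(v)` and `d²_{K_ii}(u,v) = K(u,u)_{ii} − 2K(u,v)_{ii} + K(v,v)_{ii}`,
the regularity condition of Lemma 1 holds iff the feature map `Φ` is Lipschitz
with respect to the Frobenius norm. -/
theorem explicit_kernel_regularity_iff_lipschitz_features
    (d p : ℕ) (hd : 1 ≤ d) (hp : 1 ≤ p)
    (Φ : EuclideanSpace ℝ (Fin d) → Matrix (Fin p) (Fin d) ℝ)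
    (K : EuclideanSpace ℝ (Fin d) → EuclideanSpace ℝ (Fin d) → Matrix (Fin d) (Fin d) ℝ)
    (hK : ∀ u v, K u v = (Φ u)ᵀ * Φ v) :
    (∃ NK : ℝ, 0 ≤ NK ∧ ∀ u v : EuclideanSpace ℝ (Fin d), ∀ i : Fin d,
        K u u i i - 2 * K u v i i + K v v i i ≤ NK ^ 2 * ‖u - v‖ ^ 2) ↔
      (∃ N : ℝ, 0 ≤ N ∧ ∀ u v : EuclideanSpace ℝ (Fin d),
        Real.sqrt (frobeniusNormSq (Φ u - Φ v)) ≤ N * ‖u - v‖) := by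
  have hfrob : ∀ u v : EuclideanSpace ℝ (Fin d),
      frobeniusNormSq (Φ u - Φ v)
        = ∑ i : Fin d, ((K u u i i - 2 * K u v i i + K v v i i)) := by
    intro u v
    simp only [hK, key_sum]
    rw [frobeniusNormSq, Finset.sum_comm]
    simp [Matrix.sub_apply]
  constructor
  · rintro ⟨NK, hNK, h⟩
    refine ⟨Real.sqrt d * NK, by positivity, fun u v => ?_⟩
    have h1 : frobeniusNormSq (Φ u - Φ v) ≤ d * (NK ^ 2 * ‖u - v‖ ^ 2) := by
      rw [hfrob u v]
      calc ∑ i : Fin d, (K u u i i - 2 * K u v i i + K v v i i)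
          ≤ ∑ _i : Fin d, NK ^ 2 * ‖u - v‖ ^ 2 :=
            Finset.sum_le_sum fun i _ => h u v i
        _ = d * (NK ^ 2 * ‖u - v‖ ^ 2) := by simp [Finset.sum_const]
    have h2 : d * (NK ^ 2 * ‖u - v‖ ^ 2) = (Real.sqrt d * NK * ‖u - v‖) ^ 2 := by
      rw [mul_pow, mul_pow, Real.sq_sqrt (by positivity)]
      ring
    calc Real.sqrt (frobeniusNormSq (Φ u - Φ v))
        ≤ Real.sqrt ((Real.sqrt d * NK * ‖u - v‖) ^ 2) :=
          Real.sqrt_le_sqrt (h2 ▸ h1)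
      _ = Real.sqrt d * NK * ‖u - v‖ := Real.sqrt_sq (by positivity)
  · rintro ⟨N, hN, h⟩
    refine ⟨N, hN, fun u v i => ?_⟩
    have hterm : ∀ i' : Fin d, 0 ≤ K u u i' i' - 2 * K u v i' i' + K v v i' i' := by
      intro i'
      rw [hK, hK, hK, key_sum]
      positivity
    have h1 : K u u i i - 2 * K u v i i + K v v i i
        ≤ frobeniusNormSq (Φ u - Φ v) := by
      rw [hfrob u v]
      exact Finset.single_le_sum (fun i' _ => hterm i') (Finset.mem_univ i)
    have h2 : frobeniusNormSq (Φ u - Φ v) ≤ (N * ‖u - v‖) ^ 2 := by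
      have hnn : 0 ≤ frobeniusNormSq (Φ u - Φ v) := by
        rw [hfrob u v]; exact Finset.sum_nonneg fun i' _ => hterm i'
      have := h u v
      nlinarith [Real.sq_sqrt hnn, Real.sqrt_nonneg (frobeniusNormSq (Φ u - Φ v))]
    calc K u u i i - 2 * K u v i i + K v v i i ≤ (N * ‖u - v‖) ^ 2 := h1.trans h2
      _ = N ^ 2 * ‖u - v‖ ^ 2 := by ring
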